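/- For every strict partition γ, every n, every 1 ≤ i < n, and every T ∈ SSHT_n(γ) with f_i*(T) ≠ 0, the weight of f_i*(T) is obtained from the weight of T by decreasing the i-th part by 1 and increasing the (i+1)-st part by 1; all other parts of the weight are unchanged. -/

import Mathlib

/-! ## Strict partitions and shifted diagrams (French convention, 1-indexed).

A marked entry `i'` is encoded as `2*i - 1` and an unmarked entry `i` as `2*i`;
the value `0` denotes an empty cell / a cell outside the diagram.  The total
order `1' < 1 < 2' < 2 < ⋯` then coincides with the usual order on `ℕ`. -/

/-- A strict partition: a strictly decreasing list of positive integers. -/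
def StrictPartition (γ : List ℕ) : Prop :=
  γ.Chain' (· > ·) ∧ ∀ x ∈ γ, 0 < x

/-- The `r`-th part (1-indexed) of a partition given as a list. -/
def part (γ : List ℕ) (r : ℕ) : ℕ := γ.getD (r - 1) 0

/-- The cell `(r, c)` (row `r` indexed from the bottom, column `c`, both 1-indexed)
belongs to the shifted diagram of `γ`: row `r` has `γ_r` cells, with its leftmost
cell on the main diagonal `c = r`. -/
def ShiftedShape (γ : List ℕ) (rc : ℕ × ℕ) : Prop :=
  1 ≤ rc.1 ∧ rc.1 ≤ γ.length ∧ rc.1 ≤ rc.2 ∧ rc.2 < rc.1 + part γ rc.1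

instance (γ : List ℕ) (rc : ℕ × ℕ) : Decidable (ShiftedShape γ rc) := by
  unfold ShiftedShape; infer_instance

/-- A common bound for all row and column indices of cells of the (shifted) diagram. -/
def colBound (γ : List ℕ) : ℕ := γ.length + γ.foldr max 0

/-- The cells of the shifted diagram of `γ`, as a finite set. -/
def shapeCells (γ : List ℕ) : Finset (ℕ × ℕ) :=
  (Finset.range (colBound γ + 1) ×ˢ Finset.range (colBound γ + 1)).filter
    (fun rc => ShiftedShape γ rc)

/-- A semistandard shifted tableau of shape `γ` with entries in
`{1' < 1 < 2' < 2 < ⋯ < n' < n}` (encoded as `{1, 2, …, 2n}`): entries weakly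
increase along rows (eastward) and columns (northward, i.e. increasing row
index), with at most one unmarked `i` per column, at most one marked `i'` per
row, and no marked entries on the main diagonal. -/
structure SSHT (n : ℕ) (γ : List ℕ) where
  entry : ℕ × ℕ → ℕ
  zero_outside : ∀ rc, ¬ ShiftedShape γ rc → entry rc = 0
  pos : ∀ rc, ShiftedShape γ rc → 1 ≤ entry rc
  le_two_n : ∀ rc, ShiftedShape γ rc → entry rc ≤ 2 * n
  row_mono : ∀ r c c', c < c' → ShiftedShape γ (r, c) → ShiftedShape γ (r, c') →
    entry (r, c) ≤ entry (r, c')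
  col_mono : ∀ r r' c, r < r' → ShiftedShape γ (r, c) → ShiftedShape γ (r', c) →
    entry (r, c) ≤ entry (r', c)
  col_unmarked : ∀ r r' c, r < r' → ShiftedShape γ (r, c) → ShiftedShape γ (r', c) →
    entry (r, c) = entry (r', c) → entry (r, c) % 2 = 1
  row_marked : ∀ r c c', c < c' → ShiftedShape γ (r, c) → ShiftedShape γ (r, c') →
    entry (r, c) = entry (r, c') → entry (r, c) % 2 = 0
  diag_unmarked : ∀ r, ShiftedShape γ (r, r) → entry (r, r) % 2 = 0

/-- The weight of a filling of the shifted diagram of `γ`: `wtFun γ f k` is the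
number of cells whose entry equals `k` or `k'` (encoded `2k` or `2k-1`). -/
def wtFun (γ : List ℕ) (f : ℕ × ℕ → ℕ) (k : ℕ) : ℕ :=
  ((shapeCells γ).filter (fun rc => f rc = 2 * k - 1 ∨ f rc = 2 * k)).card

/-! ## The hook reading word and the statistics `m_i`. -/

/-- The cells of `T` listed in hook reading order: for `c` from the maximal
column down to `1`, the cells of marked entries read up the `c`-th column,
followed by the cells of unmarked entries of the `c`-th row read left to
right. -/
def hookCells {n : ℕ} {γ : List ℕ} (T : SSHT n γ) : List (ℕ × ℕ) :=
  ((List.range (colBound γ)).reverse.map (· + 1)).flatMap (fun c =>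
    (((List.range (colBound γ)).map (· + 1)).filter
        (fun r => decide (ShiftedShape γ (r, c)) && decide (T.entry (r, c) % 2 = 1))).map
      (fun r => (r, c))
    ++
    (((List.range (colBound γ)).map (· + 1)).filter
        (fun j => decide (ShiftedShape γ (c, j)) && decide (T.entry (c, j) % 2 = 0))).map
      (fun j => (c, j)))

/-- The value of an encoded entry: both `i'` (encoded `2i-1`) and `i`
(encoded `2i`) have value `i`. -/
def entryValue (e : ℕ) : ℕ := (e + 1) / 2

/-- The hook reading word of a shifted tableau (a word in the values `1, …, n`). -/
def hookWord {n : ℕ} {γ : List ℕ} (T : SSHT n γ) : List ℕ :=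
  (hookCells T).map (fun rc => entryValue (T.entry rc))

/-- `mAt i w r` is `m_i(w, r)`: the number of `i`'s minus the number of
`(i+1)`'s among the first `r` letters of `w`. -/
def mAt (i : ℕ) (w : List ℕ) (r : ℕ) : ℤ :=
  ((w.take r).count i : ℤ) - ((w.take r).count (i + 1) : ℤ)

/-- `mMax i w` is `m_i(w) = max_{1 ≤ r ≤ |w|} m_i(w, r)` (with value `0` for the
empty word). -/
noncomputable def mMax (i : ℕ) (w : List ℕ) : ℤ :=
  WithBot.unbotD 0 (((List.range w.length).map (fun r => mAt i w (r + 1))).maximum)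

/-! ## The shifted lowering operators `f_i*`. -/

/-- The cell lies on the `k`-ribbon of `T`: its entry is `k'` or `k`
(encoded `2k - 1` or `2k`). -/
def inRibbon {n : ℕ} {γ : List ℕ} (T : SSHT n γ) (k : ℕ) (rc : ℕ × ℕ) : Prop :=
  T.entry rc = 2 * k - 1 ∨ T.entry rc = 2 * k

instance {n : ℕ} {γ : List ℕ} (T : SSHT n γ) (k : ℕ) (rc : ℕ × ℕ) :
    Decidable (inRibbon T k rc) := by unfold inRibbon; infer_instance

/-- Walk northwest (north if possible, else west) along the `k`-ribbon of `T`,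
starting from a given cell; returns the northwestern-most cell of the ribbon
containing it. -/
def nwWalk {n : ℕ} {γ : List ℕ} (T : SSHT n γ) (k : ℕ) : ℕ → ℕ × ℕ → ℕ × ℕ
  | 0, rc => rc
  | fuel + 1, (r, c) =>
    if inRibbon T k (r + 1, c) then nwWalk T k fuel (r + 1, c)
    else if inRibbon T k (r, c - 1) then nwWalk T k fuel (r, c - 1)
    else (r, c)

/-- Walk along the `i`-ribbon of `T` away from its starting cell (east if
possible, else south), returning the first cell carrying an unmarked entry `i`
that is not followed (on its east) by `i` or `(i+1)'`. -/
def ribbonTarget {n : ℕ} {γ : List ℕ} (T : SSHT n γ) (i : ℕ) : ℕ → ℕ × ℕ → Option (ℕ × ℕ)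
  | 0, _ => none
  | fuel + 1, (r, c) =>
    if T.entry (r, c) = 2 * i ∧ T.entry (r, c + 1) ≠ 2 * i ∧
        T.entry (r, c + 1) ≠ 2 * i + 1 then some (r, c)
    else if inRibbon T i (r, c + 1) then ribbonTarget T i fuel (r, c + 1)
    else if inRibbon T i (r - 1, c) then ribbonTarget T i fuel (r - 1, c)
    else none

/-- The shifted lowering operator `f_i*`, described on the underlying fillings:
`shiftedLowerFun i T = none` when `f_i*(T) = 0`, and otherwise it returns the
filling of the tableau `f_i*(T)`.  The cases `1(a)-(c)` and `2(a)-(c)` follow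
Definition 3.3 of the paper. -/
noncomputable def shiftedLowerFun {n : ℕ} {γ : List ℕ} (i : ℕ) (T : SSHT n γ) : Option (ℕ × ℕ → ℕ) :=
  if mMax i (hookWord T) ≤ 0 then none
  else
    let w := hookWord T
    let pIdx := (List.range w.length).findIdx (fun r => decide (mAt i w (r + 1) = mMax i w))
    match (hookCells T)[pIdx]? with
    | none => none
    | some (r, c) =>
      let x := T.entry (r, c)
      let y := T.entry (r + 1, c)   -- the entry north of `x`
      let z := T.entry (r, c + 1)   -- the entry east of `x`
      if x = 2 * i then
        -- case 1(a): `z = (i+1)'`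
        if z = 2 * i + 1 then
          some (fun rc => if rc = (r, c) then 2 * i + 1
            else if rc = (r, c + 1) then 2 * i + 2 else T.entry rc)
        -- case 1(b): `y` does not exist or `y > i + 1`
        else if ¬ ShiftedShape γ (r + 1, c) ∨ 2 * i + 2 < y then
          some (fun rc => if rc = (r, c) then 2 * i + 2 else T.entry rc)
        -- case 1(c): unmark the northwestern-most cell of the `(i+1)`-ribbon through `y`
        else
          let q := nwWalk T (i + 1) (2 * colBound γ + 2) (r + 1, c)
          some (fun rc => if rc = (r, c) then 2 * i + 1
            else if rc = q then (if T.entry q % 2 = 1 then T.entry q + 1 else T.entry q)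
            else T.entry rc)
      else
        -- case 2(a): `y = i`
        if y = 2 * i then
          some (fun rc => if rc = (r, c) then 2 * i
            else if rc = (r + 1, c) then 2 * i + 1 else T.entry rc)
        -- case 2(b): `z` does not exist or `z > (i+1)'`
        else if ¬ ShiftedShape γ (r, c + 1) ∨ 2 * i + 1 < z then
          some (fun rc => if rc = (r, c) then 2 * i + 1 else T.entry rc)
        -- case 2(c): change the first unmarked `i` along the `i`-ribbon through `x`
        -- not followed by `i` or `(i+1)'` into `(i+1)'`
        else
          match ribbonTarget T i (2 * colBound γ + 2) (r, c) with
          | none => none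
          | some q => some (fun rc => if rc = (r, c) then 2 * i
              else if rc = q then 2 * i + 1 else T.entry rc)

section Aux

/-- entry count indicator -/
def cnt (k e : ℕ) : ℕ := if e = 2*k-1 ∨ e = 2*k then 1 else 0

lemma wtFun_eq (γ : List ℕ) (f : ℕ × ℕ → ℕ) (k : ℕ) :
    wtFun γ f k = ∑ x ∈ shapeCells γ, cnt k (f x) := by
  rw [wtFun, Finset.card_filter]
  exact Finset.sum_congr rfl (fun x _ => by by_cases h : f x = 2*k-1 ∨ f x = 2*k <;> simp [cnt, h])

lemma sum_upd1 {α : Type*} [DecidableEq α] (S : Finset α) {p : α} (hp : p ∈ S)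
    (F G : α → ℕ) (h : ∀ x ∈ S, x ≠ p → G x = F x) :
    (∑ x ∈ S, G x) + F p = (∑ x ∈ S, F x) + G p := by
  rw [← Finset.add_sum_erase S G hp, ← Finset.add_sum_erase S F hp]
  have he : ∑ x ∈ S.erase p, G x = ∑ x ∈ S.erase p, F x :=
    Finset.sum_congr rfl (fun x hx => h x (Finset.mem_of_mem_erase hx) (Finset.ne_of_mem_erase hx))
  omega

lemma sum_upd2 {α : Type*} [DecidableEq α] (S : Finset α) {p q : α} (hp : p ∈ S) (hq : q ∈ S)
    (hpq : p ≠ q) (F G : α → ℕ) (h : ∀ x ∈ S, x ≠ p → x ≠ q → G x = F x) :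
    (∑ x ∈ S, G x) + (F p + F q) = (∑ x ∈ S, F x) + (G p + G q) := by
  have hq' : q ∈ S.erase p := Finset.mem_erase.2 ⟨fun hh => hpq hh.symm, hq⟩
  rw [← Finset.add_sum_erase S G hp, ← Finset.add_sum_erase S F hp,
    ← Finset.add_sum_erase _ G hq', ← Finset.add_sum_erase _ F hq']
  have he : ∑ x ∈ (S.erase p).erase q, G x = ∑ x ∈ (S.erase p).erase q, F x :=
    Finset.sum_congr rfl (fun x hx => h x (Finset.mem_of_mem_erase (Finset.mem_of_mem_erase hx))
      (Finset.ne_of_mem_erase (Finset.mem_of_mem_erase hx)) (Finset.ne_of_mem_erase hx))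
  omega

lemma getD_le_foldr (l : List ℕ) (j : ℕ) : l.getD j 0 ≤ l.foldr max 0 := by
  induction l generalizing j with
  | nil => simp
  | cons a t ih =>
    cases j with
    | zero => simp
    | succ m => simpa using le_trans (ih m) (le_max_right _ _)

lemma mem_shapeCells {γ : List ℕ} {rc : ℕ × ℕ} (h : ShiftedShape γ rc) :
    rc ∈ shapeCells γ := by
  obtain ⟨r, c⟩ := rc
  obtain ⟨h1, h2, h3, h4⟩ := h
  have hpart : part γ r ≤ γ.foldr max 0 := getD_le_foldr γ (r - 1)
  have h4' : c < r + part γ r := h4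
  simp only [shapeCells, Finset.mem_filter, Finset.mem_product, Finset.mem_range]
  refine ⟨⟨?_, ?_⟩, ⟨h1, h2, h3, h4⟩⟩ <;> simp only [colBound] <;> omega

lemma shape_of_entry_pos {n : ℕ} {γ : List ℕ} (T : SSHT n γ) {rc : ℕ × ℕ}
    (h : T.entry rc ≠ 0) : ShiftedShape γ rc := by
  by_contra hc; exact h (T.zero_outside rc hc)

lemma hookCells_shape {n : ℕ} {γ : List ℕ} (T : SSHT n γ) {rc : ℕ × ℕ}
    (h : rc ∈ hookCells T) : ShiftedShape γ rc := by
  simp only [hookCells, List.mem_flatMap, List.mem_append, List.mem_map, List.mem_filter,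
    Bool.and_eq_true, decide_eq_true_eq] at h
  obtain ⟨a, -, ⟨b, ⟨-, hs, -⟩, rfl⟩ | ⟨b, ⟨-, hs, -⟩, rfl⟩⟩ := h <;> exact hs

lemma ribbonTarget_entry {n : ℕ} {γ : List ℕ} (T : SSHT n γ) (i : ℕ) :
    ∀ (fuel : ℕ) (rc q : ℕ × ℕ), ribbonTarget T i fuel rc = some q → T.entry q = 2 * i := by
  intro fuel
  induction fuel with
  | zero => intro rc q h; simp [ribbonTarget] at h
  | succ m ih =>
    rintro ⟨r, c⟩ q h
    rw [ribbonTarget] at h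
    split_ifs at h with h1 h2 h3
    case pos => cases h; exact h1.1
    all_goals first | exact ih _ _ h | simp at h

lemma cnt_unmark (k e : ℕ) (he : e % 2 = 1) : cnt k (e + 1) = cnt k e := by
  simp only [cnt]; split_ifs <;> omega

lemma mAt_zero (i : ℕ) (w : List ℕ) : mAt i w 0 = 0 := by simp [mAt]

lemma mAt_succ (i : ℕ) (w : List ℕ) (p : ℕ) (h : p < w.length) :
    mAt i w (p + 1) = mAt i w p + (if w.get ⟨p, h⟩ = i then 1 else 0)
      - (if w.get ⟨p, h⟩ = i + 1 then 1 else 0) := by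
  have ht : w.take (p + 1) = w.take p ++ [w.get ⟨p, h⟩] := by
    rw [List.take_succ]
    congr 1
    rw [List.getElem?_eq_getElem h]
    simp [List.get_eq_getElem]
  simp only [mAt, ht, List.count_append, List.count_singleton', beq_iff_eq,
    Nat.cast_add, Nat.cast_ite, Nat.cast_one, Nat.cast_zero]
  split_ifs <;> omega

lemma le_mMax (i : ℕ) (w : List ℕ) (r : ℕ) (h : r < w.length) :
    mAt i w (r + 1) ≤ mMax i w := by
  set L := (List.range w.length).map (fun r => mAt i w (r + 1)) with hL
  have hm : mAt i w (r + 1) ∈ L := List.mem_map.2 ⟨r, List.mem_range.2 h, rfl⟩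
  rcases hmax : L.maximum with _ | m
  · exact (List.not_mem_nil (List.maximum_eq_bot.1 hmax ▸ hm)).elim
  · have := List.le_maximum_of_mem hm hmax
    rw [mMax, ← hL, hmax]; exact this

lemma mMax_attained (i : ℕ) (w : List ℕ) (h : 0 < mMax i w) :
    ∃ r < w.length, mAt i w (r + 1) = mMax i w := by
  set L := (List.range w.length).map (fun r => mAt i w (r + 1)) with hL
  rcases hmax : L.maximum with _ | m
  · exfalso; rw [mMax, ← hL, hmax] at h; exact lt_irrefl 0 h
  · have hm : m ∈ L := List.maximum_mem hmax
    obtain ⟨r, hr, hrm⟩ := List.mem_map.1 hm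
    exact ⟨r, List.mem_range.1 hr, by rw [hrm, mMax, ← hL, hmax]; rfl⟩

lemma letter_lemma (i : ℕ) (w : List ℕ) (hM : 0 < mMax i w) :
    (List.range w.length).findIdx (fun r => decide (mAt i w (r + 1) = mMax i w)) < w.length ∧
    ∀ hh : (List.range w.length).findIdx
        (fun r => decide (mAt i w (r + 1) = mMax i w)) < w.length,
      w.get ⟨_, hh⟩ = i := by
  set P : ℕ → Bool := fun r => decide (mAt i w (r + 1) = mMax i w) with hP
  obtain ⟨r0, hr0, hr0eq⟩ := mMax_attained i w hM
  have hex : ∃ x ∈ List.range w.length, P x = true :=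
    ⟨r0, List.mem_range.2 hr0, by simp [hP, hr0eq]⟩
  have hlt : (List.range w.length).findIdx P < (List.range w.length).length :=
    List.findIdx_lt_length_of_exists hex
  rw [List.length_range] at hlt
  set p := (List.range w.length).findIdx P with hp
  refine ⟨hlt, fun hh => ?_⟩
  have hPp : P ((List.range w.length).get ⟨p, by rwa [List.length_range]⟩) = true :=
    List.findIdx_getElem
  simp only [List.get_eq_getElem, List.getElem_range] at hPp
  have heqM : mAt i w (p + 1) = mMax i w := by simpa [hP] using hPp
  have hlt' : mAt i w p < mMax i w := by
    rcases Nat.eq_zero_or_pos p with h0 | h0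
    · rw [h0, mAt_zero]; exact hM
    · have hle : mAt i w p ≤ mMax i w := by
        have := le_mMax i w (p - 1) (by omega)
        rwa [Nat.sub_add_cancel h0] at this
      have hne : mAt i w p ≠ mMax i w := by
        have hidx : p - 1 < p := by omega
        have := List.not_of_lt_findIdx (p := P) (xs := List.range w.length)
          (by rw [hp] at hidx; exact hidx)
        rw [List.getElem_range] at this
        intro hcon
        rw [hP] at this
        simp only [decide_eq_false_iff_not] at this
        exact this (by rwa [Nat.sub_add_cancel h0])
      omega
  have hrec := mAt_succ i w p hh
  rw [heqM] at hrec
  by_contra hne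
  rw [if_neg hne] at hrec
  split_ifs at hrec <;> omega

lemma entry_val {n : ℕ} {γ : List ℕ} (i : ℕ) (T : SSHT n γ)
    (h : ¬ mMax i (hookWord T) ≤ 0) {pq : ℕ × ℕ}
    (heq : (hookCells T)[(List.range (hookWord T).length).findIdx
      (fun r => decide (mAt i (hookWord T) (r + 1) = mMax i (hookWord T)))]? = some pq) :
    entryValue (T.entry pq) = i := by
  set w := hookWord T with hw
  set p := (List.range w.length).findIdx (fun r => decide (mAt i w (r + 1) = mMax i w)) with hp
  obtain ⟨hlt, hget⟩ := letter_lemma i w (by omega)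
  have h1 : w[p]? = some (entryValue (T.entry pq)) := by
    rw [hw, hookWord, List.getElem?_map, heq]; rfl
  have h2 : w[p]? = some i := by
    rw [List.getElem?_eq_some_iff]
    exact ⟨hlt, hget hlt⟩
  rw [h1] at h2
  exact (Option.some.inj h2)

end Aux

lemma final_two (γ : List ℕ) (i : ℕ) (gf ent : ℕ × ℕ → ℕ) (p q : ℕ × ℕ)
    (hp : p ∈ shapeCells γ) (hq : q ∈ shapeCells γ) (hpq : p ≠ q)
    (a b a' b' : ℕ) (hap : ent p = a) (haq : ent q = b) (hgp : gf p = a') (hgq : gf q = b')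
    (hoff : ∀ x, x ≠ p → x ≠ q → gf x = ent x)
    (hwi : cnt i a' + cnt i b' + 1 = cnt i a + cnt i b)
    (hwi1 : cnt (i+1) a' + cnt (i+1) b' = cnt (i+1) a + cnt (i+1) b + 1)
    (hwk : ∀ k, k ≠ i → k ≠ i + 1 → cnt k a' + cnt k b' = cnt k a + cnt k b) :
    wtFun γ gf i + 1 = wtFun γ ent i ∧
    wtFun γ gf (i + 1) = wtFun γ ent (i + 1) + 1 ∧
    (∀ k, k ≠ i → k ≠ i + 1 → wtFun γ gf k = wtFun γ ent k) := by
  have H : ∀ k, wtFun γ gf k + (cnt k a + cnt k b) = wtFun γ ent k + (cnt k a' + cnt k b') := by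
    intro k
    rw [wtFun_eq, wtFun_eq, ← hap, ← haq, ← hgp, ← hgq]
    have h2 := sum_upd2 (shapeCells γ) hp hq hpq (fun x => cnt k (ent x)) (fun x => cnt k (gf x))
      (fun x _ hx1 hx2 => by simp only [hoff x hx1 hx2])
    simpa using h2
  refine ⟨?_, ?_, fun k hk hk' => ?_⟩
  · have := H i; omega
  · have := H (i+1); omega
  · have := H k; have := hwk k hk hk'; omega

lemma final_one (γ : List ℕ) (i : ℕ) (gf ent : ℕ × ℕ → ℕ) (p : ℕ × ℕ)
    (hp : p ∈ shapeCells γ) (a a' : ℕ) (hap : ent p = a) (hgp : gf p = a')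
    (hoff : ∀ k x, x ≠ p → cnt k (gf x) = cnt k (ent x))
    (hwi : cnt i a' + 1 = cnt i a)
    (hwi1 : cnt (i+1) a' = cnt (i+1) a + 1)
    (hwk : ∀ k, k ≠ i → k ≠ i + 1 → cnt k a' = cnt k a) :
    wtFun γ gf i + 1 = wtFun γ ent i ∧
    wtFun γ gf (i + 1) = wtFun γ ent (i + 1) + 1 ∧
    (∀ k, k ≠ i → k ≠ i + 1 → wtFun γ gf k = wtFun γ ent k) := by
  have H : ∀ k, wtFun γ gf k + cnt k a = wtFun γ ent k + cnt k a' := by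
    intro k
    rw [wtFun_eq, wtFun_eq, ← hap, ← hgp]
    have h2 := sum_upd1 (shapeCells γ) hp (fun x => cnt k (ent x)) (fun x => cnt k (gf x))
      (fun x _ hx1 => hoff k x hx1)
    simpa using h2
  refine ⟨?_, ?_, fun k hk hk' => ?_⟩
  · have := H i; omega
  · have := H (i+1); omega
  · have := H k; have := hwk k hk hk'; omega

/-- For `1 ≤ i < n` and `T ∈ SSHT_n(γ)` with `f_i*(T) ≠ 0`,
the weight of `f_i*(T)` is obtained from the weight of `T` by decreasing the
`i`-th part by `1` and increasing the `(i+1)`-st part by `1`; all other parts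
are unchanged. -/
theorem shiftedLower_wt (n : ℕ) (γ : List ℕ) (hγ : StrictPartition γ)
    (i : ℕ) (h1 : 1 ≤ i) (h2 : i < n) (T : SSHT n γ)
    (g : ℕ × ℕ → ℕ) (hg : shiftedLowerFun i T = some g) :
    wtFun γ g i + 1 = wtFun γ T.entry i ∧
    wtFun γ g (i + 1) = wtFun γ T.entry (i + 1) + 1 ∧
    (∀ k, k ≠ i → k ≠ i + 1 → wtFun γ g k = wtFun γ T.entry k) := by
  simp only [shiftedLowerFun] at hg
  by_cases hM : mMax i (hookWord T) ≤ 0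
  · rw [if_pos hM] at hg; exact absurd hg (by simp)
  rw [if_neg hM] at hg
  cases heq : (hookCells T)[(List.range (hookWord T).length).findIdx
      (fun r => decide (mAt i (hookWord T) (r + 1) = mMax i (hookWord T)))]? with
  | none => rw [heq] at hg; exact absurd hg (by simp)
  | some p =>
    obtain ⟨r, c⟩ := p
    rw [heq] at hg
    have hmem : ((r, c) : ℕ × ℕ) ∈ hookCells T := List.mem_of_getElem? heq
    have hshape : ShiftedShape γ (r, c) := hookCells_shape T hmem
    have hpS : ((r, c) : ℕ × ℕ) ∈ shapeCells γ := mem_shapeCells hshape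
    have hvali : entryValue (T.entry (r, c)) = i := entry_val i T hM heq
    have hpos : 1 ≤ T.entry (r, c) := T.pos _ hshape
    have hx : T.entry (r, c) = 2 * i - 1 ∨ T.entry (r, c) = 2 * i := by
      rw [entryValue] at hvali; omega
    dsimp only at hg
    split_ifs at hg with hx2i hz hyb hpar hy2i hzb
    -- case 1a
    · obtain rfl := Option.some.inj hg
      have hzsh : ShiftedShape γ (r, c + 1) := shape_of_entry_pos T (by rw [hz]; omega)
      refine final_two γ i _ T.entry (r, c) (r, c + 1) hpS (mem_shapeCells hzsh)
        (by simp) (2*i) (2*i+1) (2*i+1) (2*i+2) hx2i hz (by simp) (by simp) (fun x hx1 hx2 => by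
          simp only [if_neg hx1, if_neg hx2]) ?_ ?_ ?_
      · unfold cnt; split_ifs <;> omega
      · unfold cnt; split_ifs <;> omega
      · intro k hk hk'; unfold cnt; split_ifs <;> omega
    -- case 1b
    · obtain rfl := Option.some.inj hg
      refine final_one γ i _ T.entry (r, c) hpS (2*i) (2*i+2) hx2i (by simp)
        (fun k x hx1 => by simp only [if_neg hx1]) ?_ ?_ ?_
      · unfold cnt; split_ifs <;> omega
      · unfold cnt; split_ifs <;> omega
      · intro k hk hk'; unfold cnt; split_ifs <;> omega
    -- case 1c, marked q
    · obtain rfl := Option.some.inj hg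
      refine final_one γ i _ T.entry (r, c) hpS (2*i) (2*i+1) hx2i (by simp)
        (fun k x hx1 => ?_) ?_ ?_ ?_
      · simp only [if_neg hx1]
        split_ifs with hq
        · rw [hq, cnt_unmark _ _ hpar]
        · rfl
      · unfold cnt; split_ifs <;> omega
      · unfold cnt; split_ifs <;> omega
      · intro k hk hk'; unfold cnt; split_ifs <;> omega
    -- case 1c, unmarked q
    · obtain rfl := Option.some.inj hg
      refine final_one γ i _ T.entry (r, c) hpS (2*i) (2*i+1) hx2i (by simp)
        (fun k x hx1 => ?_) ?_ ?_ ?_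
      · simp only [if_neg hx1]
        split_ifs with hq
        · rw [hq]
        · rfl
      · unfold cnt; split_ifs <;> omega
      · unfold cnt; split_ifs <;> omega
      · intro k hk hk'; unfold cnt; split_ifs <;> omega
    -- case 2a
    · obtain rfl := Option.some.inj hg
      have hx' : T.entry (r, c) = 2 * i - 1 := by omega
      have hysh : ShiftedShape γ (r + 1, c) := shape_of_entry_pos T (by rw [hy2i]; omega)
      refine final_two γ i _ T.entry (r, c) (r + 1, c) hpS (mem_shapeCells hysh)
        (by simp) (2*i-1) (2*i) (2*i) (2*i+1) hx' hy2i (by simp) (by simp) (fun x hx1 hx2 => by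
          simp only [if_neg hx1, if_neg hx2]) ?_ ?_ ?_
      · unfold cnt; split_ifs <;> omega
      · unfold cnt; split_ifs <;> omega
      · intro k hk hk'; unfold cnt; split_ifs <;> omega
    -- case 2b
    · obtain rfl := Option.some.inj hg
      have hx' : T.entry (r, c) = 2 * i - 1 := by omega
      refine final_one γ i _ T.entry (r, c) hpS (2*i-1) (2*i+1) hx' (by simp)
        (fun k x hx1 => by simp only [if_neg hx1]) ?_ ?_ ?_
      · unfold cnt; split_ifs <;> omega
      · unfold cnt; split_ifs <;> omega
      · intro k hk hk'; unfold cnt; split_ifs <;> omega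
    -- case 2c
    · cases hrt : ribbonTarget T i (2 * colBound γ + 2) (r, c) with
      | none => rw [hrt] at hg; exact absurd hg (by simp)
      | some q =>
        rw [hrt] at hg
        obtain rfl := Option.some.inj hg
        have hx' : T.entry (r, c) = 2 * i - 1 := by omega
        have hqe : T.entry q = 2 * i := ribbonTarget_entry T i _ _ _ hrt
        have hqsh : ShiftedShape γ q := shape_of_entry_pos T (by rw [hqe]; omega)
        have hpq : ((r, c) : ℕ × ℕ) ≠ q := by
          intro hcon; rw [← hcon, hx'] at hqe; omega
        refine final_two γ i _ T.entry (r, c) q hpS (mem_shapeCells hqsh)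
          hpq (2*i-1) (2*i) (2*i) (2*i+1) hx' hqe (by simp) (by simp [Ne.symm hpq]) (fun x hx1 hx2 => by
            simp only [if_neg hx1, if_neg hx2]) ?_ ?_ ?_
        · unfold cnt; split_ifs <;> omega
        · unfold cnt; split_ifs <;> omega
        · intro k hk hk'; unfold cnt; split_ifs <;> omega
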